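/- For any uncountable cardinals κ ≤ λ ≤ 𝔠 the following are equivalent: (1) C_9(λ,κ) holds; (2) there exist a set E ⊆ ℝ of cardinality λ, a Polish space Y which is not σ-compact, and a continuous function f : E → Y such that for every complete metric d on Y compatible with its topology and every subset A ⊆ E of cardinality κ, the restriction of f to A is not uniformly continuous with respect to d. -/

import Mathlib

open Cardinal Filter

/-- `C_9(lam, κ)`: there exist a set `E ⊆ ℝ` of cardinality `lam` and a sequence of
functions `fₙ : E → ℝ` converging pointwise on `E` but not converging uniformly on any
subset of `E` of cardinality `κ`. -/
def C9 (lam κ : Cardinal.{0}) : Prop :=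
  ∃ (E : Set ℝ) (f : ℕ → E → ℝ) (g : E → ℝ),
    #E = lam ∧
    (∀ x : E, Tendsto (fun n => f n x) atTop (nhds (g x))) ∧
    ∀ A : Set E, #A = κ → ¬ TendstoUniformlyOn f g atTop A


namespace C9Aux


/-- positions of digits -/
def t (s : ℕ → ℕ) (n : ℕ) : ℕ := ∑ i ∈ Finset.range (n+1), (s i + 1)

lemma t_le_t {s : ℕ → ℕ} {m n : ℕ} (h : m ≤ n) : t s m ≤ t s n := by
  unfold t
  exact Finset.sum_le_sum_of_subset (by
    intro i hi; simp only [Finset.mem_range] at *; omega)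

lemma self_lt_t (s : ℕ → ℕ) (n : ℕ) : n + 1 ≤ t s n := by
  unfold t
  calc n + 1 = ∑ i ∈ Finset.range (n+1), 1 := by simp
  _ ≤ _ := Finset.sum_le_sum (fun i _ => by omega)

lemma t_succ (s : ℕ → ℕ) (m : ℕ) : t s (m + 1) = t s m + (s (m+1) + 1) := by
  unfold t; rw [Finset.sum_range_succ]

lemma t_add_le (s : ℕ → ℕ) (n i : ℕ) : t s n + i ≤ t s (n + i) := by
  induction i with
  | zero => simp
  | succ k ih =>
    have h := t_succ s (n + k)
    rw [show n + (k+1) = (n+k)+1 by ring]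
    omega

lemma t_congr {s s' : ℕ → ℕ} {n : ℕ} (h : ∀ i ≤ n, s i = s' i) : t s n = t s' n := by
  unfold t
  exact Finset.sum_congr rfl (fun i hi => by
    rw [h i (by simpa [Nat.lt_succ_iff] using hi)])

noncomputable def e (s : ℕ → ℕ) : ℝ := ∑' n, 2 * (1/3 : ℝ) ^ (t s n)

lemma summable_e (s : ℕ → ℕ) : Summable (fun n => 2 * (1/3 : ℝ) ^ (t s n)) := by
  apply Summable.of_nonneg_of_le (g := fun n => 2 * (1/3 : ℝ) ^ (t s n))
    (f := fun n => 2 * (1/3 : ℝ) ^ n)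
  · intro n; positivity
  · intro n
    have h1 : (1/3 : ℝ) ^ (t s n) ≤ (1/3 : ℝ) ^ n :=
      pow_le_pow_of_le_one (by norm_num) (by norm_num) (le_trans (by omega) (self_lt_t s n))
    linarith
  · exact (summable_geometric_of_lt_one (by norm_num) (by norm_num)).mul_left 2

lemma e_nonneg (s : ℕ → ℕ) : 0 ≤ e s :=
  tsum_nonneg (fun n => by positivity)

lemma e_le_one (s : ℕ → ℕ) : e s ≤ 1 := by
  have h := Summable.tsum_le_tsum (f := fun n => 2 * (1/3:ℝ) ^ (t s n)) (g := fun n => 2 * (1/3:ℝ)^(n+1))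
    (fun n => by
      have h1 : (1/3 : ℝ) ^ (t s n) ≤ (1/3 : ℝ) ^ (n+1) :=
        pow_le_pow_of_le_one (by norm_num) (by norm_num) (self_lt_t s n)
      linarith)
    (summable_e s)
    (by
      have := (summable_geometric_of_lt_one (show (0:ℝ) ≤ 1/3 by norm_num) (by norm_num)).mul_left (2 * (1/3 : ℝ))
      apply this.congr; intro n; rw [pow_succ]; ring)
  calc e s ≤ ∑' n, 2 * (1/3:ℝ)^(n+1) := h
  _ = (2 * (1/3:ℝ)) * ∑' n, (1/3:ℝ)^n := by
        rw [← tsum_mul_left]; congr 1; ext n; rw [pow_succ]; ring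
  _ = 1 := by rw [tsum_geometric_of_lt_one (by norm_num) (by norm_num)]; norm_num

/-- core separation: if s,s' agree below n and s n < s' n then e s' + (1/3)^(t s n) ≤ e s -/
lemma e_sep {s s' : ℕ → ℕ} {n : ℕ} (hagree : ∀ i < n, s i = s' i) (hlt : s n < s' n) :
    e s' + (1/3 : ℝ) ^ (t s n) ≤ e s := by
  have hsum := summable_e s
  have hsum' := summable_e s'
  have hsplit := Summable.sum_add_tsum_nat_add (f := fun n => 2 * (1/3:ℝ) ^ (t s n)) n hsum
  have hsplit' := Summable.sum_add_tsum_nat_add (f := fun n => 2 * (1/3:ℝ) ^ (t s' n)) n hsum'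
  have hheads : ∑ i ∈ Finset.range n, 2 * (1/3:ℝ) ^ (t s i) =
      ∑ i ∈ Finset.range n, 2 * (1/3:ℝ) ^ (t s' i) := by
    apply Finset.sum_congr rfl
    intro i hi
    rw [t_congr (fun j hj => hagree j (by simp at hi; omega))]
  -- lower bound for tail of s
  have htail_lb : 2 * (1/3:ℝ) ^ (t s n) ≤ ∑' i, 2 * (1/3:ℝ) ^ (t s (i + n)) := by
    have := Summable.le_tsum (f := fun i => 2 * (1/3:ℝ) ^ (t s (i + n))) (hsum.comp_injective (add_left_injective n)) 0
      (fun j _ => by positivity)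
    simpa using this
  -- t s' n ≥ t s n + 1
  have htn : t s n + 1 ≤ t s' n := by
    have h1 : t s n = (∑ i ∈ Finset.range n, (s i + 1)) + (s n + 1) := by
      unfold t; rw [Finset.sum_range_succ]
    have h2 : t s' n = (∑ i ∈ Finset.range n, (s' i + 1)) + (s' n + 1) := by
      unfold t; rw [Finset.sum_range_succ]
    have h3 : ∑ i ∈ Finset.range n, (s i + 1) = ∑ i ∈ Finset.range n, (s' i + 1) := by
      apply Finset.sum_congr rfl
      intro i hi; simp at hi; rw [hagree i hi]
    omega
  -- upper bound for tail of s'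
  have htail_ub : ∑' i, 2 * (1/3:ℝ) ^ (t s' (i + n)) ≤ (1/3:ℝ) ^ (t s n) := by
    have hcomp : ∀ i : ℕ, 2 * (1/3:ℝ) ^ (t s' (i + n)) ≤ 2 * (1/3:ℝ) ^ (t s n + 1 + i) := by
      intro i
      have : t s n + 1 + i ≤ t s' (i + n) := by
        have := t_add_le s' n i
        rw [show n + i = i + n by ring] at this
        omega
      have h1 : (1/3:ℝ) ^ (t s' (i + n)) ≤ (1/3:ℝ) ^ (t s n + 1 + i) :=
        pow_le_pow_of_le_one (by norm_num) (by norm_num) this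
      linarith
    calc ∑' i, 2 * (1/3:ℝ) ^ (t s' (i + n))
        ≤ ∑' i, 2 * (1/3:ℝ) ^ (t s n + 1 + i) := by
          apply Summable.tsum_le_tsum hcomp (hsum'.comp_injective (add_left_injective n))
          have := (summable_geometric_of_lt_one (show (0:ℝ) ≤ 1/3 by norm_num) (by norm_num)).mul_left
            (2 * (1/3 : ℝ) ^ (t s n + 1))
          apply this.congr; intro i; rw [pow_add]; ring
      _ = 2 * (1/3:ℝ) ^ (t s n + 1) * ∑' i, (1/3:ℝ)^i := by
          rw [← tsum_mul_left]; congr 1; ext i; rw [pow_add]; ring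
      _ = (1/3:ℝ) ^ (t s n) := by
          rw [tsum_geometric_of_lt_one (by norm_num) (by norm_num), pow_succ]; ring
  have : e s - e s' = (∑' i, 2 * (1/3:ℝ) ^ (t s (i + n))) - ∑' i, 2 * (1/3:ℝ) ^ (t s' (i + n)) := by
    unfold e
    rw [← hsplit, ← hsplit', hheads]; ring
  have h2 : (1/3:ℝ)^(t s n) ≤ e s - e s' := by
    rw [this]
    have := htail_lb; have := htail_ub
    linarith
  linarith

/-- the gap lemma -/
lemma e_gap {s s' : ℕ → ℕ} {n : ℕ} (h : |e s - e s'| < (1/3 : ℝ) ^ (t s n)) :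
    ∀ i < n, s i = s' i := by
  by_contra hcon
  push_neg at hcon
  have hex : ∃ i, i < n ∧ s i ≠ s' i := by
    obtain ⟨i, hi, hne⟩ := hcon; exact ⟨i, hi, hne⟩
  classical
  obtain ⟨j, ⟨hjn, hjne⟩, hjmin⟩ := Nat.findX hex
  have hagree : ∀ i < j, s i = s' i := by
    intro i hij
    by_contra hne
    exact absurd ⟨hij.trans hjn, hne⟩ (hjmin i hij)
  rcases Nat.lt_or_ge (s j) (s' j) with hlt | hge
  · have := e_sep hagree hlt
    have hmono : (1/3:ℝ) ^ (t s n) ≤ (1/3:ℝ) ^ (t s j) :=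
      pow_le_pow_of_le_one (by norm_num) (by norm_num) (t_le_t (le_of_lt hjn))
    have : (1/3:ℝ) ^ (t s n) ≤ e s - e s' := by linarith
    have habs : e s - e s' ≤ |e s - e s'| := le_abs_self _
    linarith
  · have hlt' : s' j < s j := lt_of_le_of_ne hge (Ne.symm hjne)
    have := e_sep (fun i hij => (hagree i hij).symm) hlt'
    have ht1 : t s' j ≤ t s j := by
      unfold t
      rw [Finset.sum_range_succ, Finset.sum_range_succ]
      have h3 : ∑ i ∈ Finset.range j, (s' i + 1) = ∑ i ∈ Finset.range j, (s i + 1) := by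
        apply Finset.sum_congr rfl
        intro i hi; simp at hi; rw [hagree i hi]
      omega
    have hmono : (1/3:ℝ) ^ (t s n) ≤ (1/3:ℝ) ^ (t s' j) :=
      pow_le_pow_of_le_one (by norm_num) (by norm_num) (le_trans ht1 (t_le_t (le_of_lt hjn)))
    have : (1/3:ℝ) ^ (t s n) ≤ e s' - e s := by linarith
    have habs : e s' - e s ≤ |e s - e s'| := by rw [abs_sub_comm]; exact le_abs_self _
    linarith

lemma e_injective : Function.Injective e := by
  intro s s' h
  funext n
  have := e_gap (s := s) (s' := s') (n := n + 1) (by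
    rw [h, sub_self, abs_zero]; positivity)
  exact this n (by omega)



lemma compact_bdd {K : Set (ℕ → ℕ)} (hK : IsCompact K) :
    ∃ b : ℕ → ℕ, ∀ y ∈ K, ∀ j, y j ≤ b j := by
  have hb : ∀ j : ℕ, ∃ bj : ℕ, ∀ y ∈ K, y j ≤ bj := by
    intro j
    have hc : IsCompact ((fun y : ℕ → ℕ => y j) '' K) :=
      hK.image (continuous_apply j)
    have hfin : ((fun y : ℕ → ℕ => y j) '' K).Finite := hc.finite ⟨inferInstance⟩
    obtain ⟨bj, hbj⟩ := hfin.bddAbove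
    exact ⟨bj, fun y hy => hbj (Set.mem_image_of_mem _ hy)⟩
  choose b hb using hb
  exact ⟨b, fun y hy j => hb j y hy⟩

lemma not_sigmaCompact_baire : ¬ SigmaCompactSpace (ℕ → ℕ) := by
  intro h
  have hcov := iUnion_compactCovering (ℕ → ℕ)
  have hb : ∀ n, ∃ b : ℕ → ℕ, ∀ y ∈ compactCovering (ℕ → ℕ) n, ∀ j, y j ≤ b j :=
    fun n => compact_bdd (isCompact_compactCovering _ n)
  choose b hbs using hb
  set x : ℕ → ℕ := fun n => b n n + 1 with hx
  have : x ∈ ⋃ n, compactCovering (ℕ → ℕ) n := hcov ▸ Set.mem_univ x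
  obtain ⟨_, ⟨n, rfl⟩, hmem⟩ := this
  have := hbs n x hmem n
  simp [hx] at this
end C9Aux

open C9Aux in
lemma forward (κ lam : Cardinal.{0}) (hκ : aleph 0 < κ) (hkl : κ ≤ lam)
    (h : ∃ (E : Set ℝ) (f : ℕ → E → ℝ) (g : E → ℝ),
      #E = lam ∧
      (∀ x : E, Tendsto (fun n => f n x) atTop (nhds (g x))) ∧
      ∀ A : Set E, #A = κ → ¬ TendstoUniformlyOn f g atTop A) :
    ∃ (E : Set ℝ) (Y : Type) (tY : TopologicalSpace Y) (f : E → Y),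
        #E = lam ∧ @PolishSpace Y tY ∧ ¬ @SigmaCompactSpace Y tY ∧
        @Continuous _ _ _ tY f ∧
        ∀ m : MetricSpace Y, m.toUniformSpace.toTopologicalSpace = tY →
          @CompleteSpace Y m.toUniformSpace →
          ∀ A : Set E, #A = κ → ¬ @UniformContinuousOn _ _ _ m.toUniformSpace f A := by
  classical
  obtain ⟨E, f, g, hE, hconv, hnon⟩ := h
  have hlam0 : lam ≠ 0 := by
    intro h0
    rw [h0] at hkl
    have : κ = 0 := le_antisymm hkl zero_le
    rw [this] at hκ
    exact absurd hκ (by simp)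
  have hEne : Nonempty E := Cardinal.mk_ne_zero_iff.1 (by rw [hE]; exact hlam0)
  -- modulus of convergence
  have hφex : ∀ (x : E) (k : ℕ), ∃ N, ∀ n ≥ N, dist (f n x) (g x) < 1/((k:ℝ)+1) := by
    intro x k
    exact (Metric.tendsto_atTop).1 (hconv x) (1/((k:ℝ)+1)) (by positivity)
  choose φ hφ using hφex
  -- injection from ℝ to Baire space
  have hcle : #ℝ ≤ #(ℕ → ℕ) := by
    rw [Cardinal.mk_real, Cardinal.mk_arrow, Cardinal.mk_nat, Cardinal.lift_id,
      Cardinal.aleph0_power_aleph0]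
  obtain ⟨c⟩ := (Cardinal.le_def ℝ (ℕ → ℕ)).1 hcle
  -- interleaving
  set ψ : E → ℕ → ℕ := fun x n => if n % 2 = 0 then φ x (n/2) else c x.1 (n/2) with hψ
  have hψeven : ∀ (x : E) (k : ℕ), ψ x (2*k) = φ x k := by
    intro x k
    simp only [hψ, Nat.mul_mod_right]
    norm_num
  have hψinj : Function.Injective ψ := by
    intro x x' hxx
    apply Subtype.ext
    apply c.injective
    funext j
    have := congrFun hxx (2*j+1)
    simpa [hψ, Nat.mul_add_mod, Nat.mul_add_div] using this
  set F : E → ℝ := fun x => e (ψ x) with hF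
  have hFinj : Function.Injective F := fun x x' hxx => hψinj (e_injective hxx)
  refine ⟨Set.range F, ℕ → ℕ, inferInstance, fun y => ψ (Function.invFun F y.1),
    (Cardinal.mk_range_eq F hFinj).trans hE, inferInstance, not_sigmaCompact_baire, ?_, ?_⟩
  · -- continuity
    rw [continuous_iff_continuousAt]
    intro y
    unfold ContinuousAt
    rw [tendsto_pi_nhds]
    intro i
    have hy1 : F (Function.invFun F y.1) = y.1 := Function.invFun_eq y.2
    set s : ℕ → ℕ := ψ (Function.invFun F y.1) with hs
    have hev : ∀ᶠ (y' : Set.range F) in nhds y,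
        ψ (Function.invFun F y'.1) i = s i := by
      rw [Metric.eventually_nhds_iff]
      refine ⟨(1/3:ℝ)^(t s (i+1)), by positivity, fun y' hy' => ?_⟩
      have hy'1 : F (Function.invFun F y'.1) = y'.1 := Function.invFun_eq y'.2
      set s' : ℕ → ℕ := ψ (Function.invFun F y'.1) with hs'
      have hd : dist y'.1 y.1 < (1/3:ℝ)^(t s (i+1)) := hy'
      have habs : |e s - e s'| < (1/3:ℝ)^(t s (i+1)) := by
        rw [abs_sub_comm]
        have h1 : e s' = y'.1 := hy'1
        have h2 : e s = y.1 := hy1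
        rw [h1, h2, ← Real.dist_eq]
        exact hd
      exact (e_gap habs i (by omega)).symm
    exact Filter.Tendsto.congr' (by filter_upwards [hev] with y' h using h.symm)
      tendsto_const_nhds
  · -- the key property
    intro m hm hcompl A hA huc
    set θ : A → E := fun a => Function.invFun F a.1.1 with hθdef
    have hθ : ∀ a : A, F (θ a) = a.1.1 := fun a => Function.invFun_eq a.1.2
    have hθinj : Function.Injective θ := by
      intro a a' haa
      have : a.1.1 = a'.1.1 := by rw [← hθ a, ← hθ a', haa]
      exact Subtype.ext (Subtype.ext this)
    -- A is totally bounded (in the subtype of ℝ)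
    have htbA : TotallyBounded A := by
      rw [← totallyBounded_image_iff isUniformEmbedding_subtype_val.isUniformInducing]
      apply (totallyBounded_Icc (0:ℝ) 1).subset
      rintro - ⟨a, ha, rfl⟩
      obtain ⟨x, hx⟩ := a.2
      rw [← hx]
      exact ⟨e_nonneg _, e_le_one _⟩
    have htbA' : TotallyBounded (Set.univ : Set A) := by
      rw [← totallyBounded_image_iff isUniformEmbedding_subtype_val.isUniformInducing]
      rwa [Set.image_univ, Subtype.range_val]
    -- image of A under f' is m-totally bounded
    have hucr := (@uniformContinuousOn_iff_restrict _ _ _ m.toUniformSpace _ _).1 huc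
    have htbI : @TotallyBounded _ m.toUniformSpace
        ((fun y : Set.range F => ψ (Function.invFun F y.1)) '' A) := by
      have := @TotallyBounded.image _ _ _ m.toUniformSpace _ _ htbA' hucr
      rwa [Set.image_univ, Set.range_restrict] at this
    -- compact closure
    have hKc : @IsCompact _ m.toUniformSpace.toTopologicalSpace
        (@closure _ m.toUniformSpace.toTopologicalSpace
          ((fun y : Set.range F => ψ (Function.invFun F y.1)) '' A)) := by
      letI := m.toUniformSpace
      letI := m.toUniformSpace.toTopologicalSpace
      haveI := hcompl
      exact isCompact_iff_totallyBounded_isComplete.2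
        ⟨htbI.closure, isClosed_closure.isComplete⟩
    rw [hm] at hKc
    obtain ⟨b, hb⟩ := compact_bdd hKc
    -- bound on φ over B
    have hmem : ∀ a : A, ∀ j, ψ (θ a) j ≤ b j := by
      intro a j
      apply hb
      apply subset_closure
      exact Set.mem_image_of_mem _ a.2
    set B : Set E := Set.range θ with hB
    have hBκ : #B = κ := (Cardinal.mk_range_eq θ hθinj).trans hA
    apply hnon B hBκ
    rw [Metric.tendstoUniformlyOn_iff]
    intro ε hε
    obtain ⟨k, hk⟩ := exists_nat_one_div_lt hε
    rw [eventually_atTop]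
    refine ⟨b (2*k), fun n hn => ?_⟩
    rintro x ⟨a, rfl⟩
    have hbnd : φ (θ a) k ≤ n := by
      have := hmem a (2*k)
      rw [hψeven] at this
      omega
    have := hφ (θ a) k n hbnd
    rw [dist_comm]
    calc dist (f n (θ a)) (g (θ a)) < 1/((k:ℝ)+1) := this
    _ < ε := hk


lemma backward (κ lam : Cardinal.{0})
    (h : ∃ (E : Set ℝ) (Y : Type) (tY : TopologicalSpace Y) (f : E → Y),
        #E = lam ∧ @PolishSpace Y tY ∧ ¬ @SigmaCompactSpace Y tY ∧
        @Continuous _ _ _ tY f ∧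
        ∀ m : MetricSpace Y, m.toUniformSpace.toTopologicalSpace = tY →
          @CompleteSpace Y m.toUniformSpace →
          ∀ A : Set E, #A = κ → ¬ @UniformContinuousOn _ _ _ m.toUniformSpace f A) :
    ∃ (E : Set ℝ) (f : ℕ → E → ℝ) (g : E → ℝ),
    #E = lam ∧
    (∀ x : E, Tendsto (fun n => f n x) atTop (nhds (g x))) ∧
    ∀ A : Set E, #A = κ → ¬ TendstoUniformlyOn f g atTop A := by
  classical
  obtain ⟨E, Y, tY, f, hE, hPol, _hSig, hcont, hprop⟩ := h
  letI := tY
  letI : PolishSpace Y := hPol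
  letI := TopologicalSpace.upgradeIsCompletelyMetrizable Y
  set S : ℕ → E → Set ℝ :=
    fun n x => {r | ∃ y : E, dist x y ≤ 1/(n+1 : ℝ) ∧ r = min 1 (dist (f x) (f y))} with hS
  have hmemS : ∀ n (x : E), (0:ℝ) ∈ S n x := by
    intro n x
    exact ⟨x, by simp [dist_self]; positivity, by simp [dist_self]⟩
  have hbddS : ∀ n (x : E), BddAbove (S n x) := by
    intro n x
    refine ⟨1, fun r hr => ?_⟩
    obtain ⟨y, _, rfl⟩ := hr
    exact min_le_left _ _
  set fQ : ℕ → E → ℝ := fun n x => sSup (S n x) with hfQ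
  have hfQ_nonneg : ∀ n x, 0 ≤ fQ n x := fun n x => le_csSup (hbddS n x) (hmemS n x)
  have hfQ_le : ∀ n x r, r ∈ S n x → r ≤ fQ n x := fun n x r hr => le_csSup (hbddS n x) hr
  refine ⟨E, fQ, fun _ => 0, hE, ?_, ?_⟩
  · -- pointwise convergence
    intro x
    rw [Metric.tendsto_atTop]
    intro ε hε
    have hca : ContinuousAt f x := hcont.continuousAt
    rw [Metric.continuousAt_iff] at hca
    obtain ⟨δ, hδ, hδ2⟩ := hca (ε/2) (by positivity)
    obtain ⟨N, hN⟩ := exists_nat_one_div_lt (ε := δ) hδ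
    refine ⟨N, fun n hn => ?_⟩
    have hle : fQ n x ≤ ε/2 := by
      apply Real.sSup_le _ (by positivity)
      rintro r ⟨y, hy, rfl⟩
      have h1 : dist y x < δ := by
        rw [dist_comm]
        calc dist x y ≤ 1/(n+1:ℝ) := hy
        _ ≤ 1/(N+1:ℝ) := by
            apply one_div_le_one_div_of_le (by positivity)
            exact_mod_cast by omega
        _ < δ := hN
      have : dist (f y) (f x) < ε/2 := hδ2 h1
      rw [dist_comm] at this
      have hm : min 1 (dist (f x) (f y)) ≤ dist (f x) (f y) := min_le_right _ _
      linarith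
    show dist (fQ n x) 0 < ε
    rw [Real.dist_0_eq_abs, abs_of_nonneg (hfQ_nonneg n x)]
    linarith
  · -- not uniformly convergent on κ-sized sets
    intro A hA htu
    refine hprop inferInstance rfl inferInstance A hA ?_
    rw [Metric.uniformContinuousOn_iff]
    intro ε hε
    set ε' : ℝ := min 1 ε / 2 with hε'
    have hε'pos : 0 < ε' := by
      have : (0:ℝ) < min 1 ε := lt_min one_pos hε
      positivity
    obtain ⟨N, hN⟩ := (eventually_atTop).1 ((Metric.tendstoUniformlyOn_iff.1 htu) ε' hε'pos)
    refine ⟨1/(N+1:ℝ), by positivity, fun x hx y hy hxy => ?_⟩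
    have hr : min 1 (dist (f x) (f y)) ∈ S N x := ⟨y, hxy.le, rfl⟩
    have h1 : min 1 (dist (f x) (f y)) ≤ fQ N x := hfQ_le N x _ hr
    have h2 : fQ N x < ε' := by
      have h3 : dist (0:ℝ) (fQ N x) < ε' := hN N le_rfl x hx
      rw [dist_comm, Real.dist_0_eq_abs, abs_of_nonneg (hfQ_nonneg N x)] at h3
      exact h3
    have hε'le : ε' ≤ 1/2 := by
      have : min 1 ε ≤ 1 := min_le_left _ _
      rw [hε']; linarith
    have hd : dist (f x) (f y) < 1 := by
      by_contra hge
      push_neg at hge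
      rw [min_eq_left hge] at h1
      linarith
    rw [min_eq_right hd.le] at h1
    have : min 1 ε ≤ ε := min_le_right _ _
    calc dist (f x) (f y) ≤ fQ N x := h1
    _ < ε' := h2
    _ ≤ ε := by rw [hε']; linarith

/-- `C_9(lam,κ)` is equivalent to the existence of a set `E ⊆ ℝ` of cardinality `lam`,
a non-σ-compact Polish space `Y`, and a continuous `f : E → Y` which is not uniformly
continuous, with respect to any complete metric on `Y` compatible with its topology,
on any subset of `E` of cardinality `κ`. -/
theorem stmt_1 (κ lam : Cardinal.{0}) (hκ : aleph 0 < κ) (hkl : κ ≤ lam)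
    (hlc : lam ≤ continuum) :
    C9 lam κ ↔
      ∃ (E : Set ℝ) (Y : Type) (tY : TopologicalSpace Y) (f : E → Y),
        #E = lam ∧ @PolishSpace Y tY ∧ ¬ @SigmaCompactSpace Y tY ∧
        @Continuous _ _ _ tY f ∧
        ∀ m : MetricSpace Y, m.toUniformSpace.toTopologicalSpace = tY →
          @CompleteSpace Y m.toUniformSpace →
          ∀ A : Set E, #A = κ → ¬ @UniformContinuousOn _ _ _ m.toUniformSpace f A := by
  constructor
  · intro h
    exact forward κ lam hκ hkl h
  · intro h
    exact backward κ lam h
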